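/- Let X be a path-connected, locally path-connected topological space, (m_k)_k a convergent sequence in X with limit m, and ρ : [0,1] → X defined by choosing paths ρ_k : [1 - 1/(k+1), 1 - 1/(k+2)] → X from m_k to m_{k+1} such that for every neighborhood U of m all but finitely many ρ_k have image in U, with ρ(1) = m. Then ρ is continuous, i.e., the infinite concatenation of the paths ρ_k together with the endpoint m is a path from m₀ to m. -/

import Mathlib

open Filter Set

/-- The junction points `a k = 1 - 1/(k+1)`. -/
noncomputable def icAux (k : ℕ) : ℝ := 1 - 1 / ((k : ℝ) + 1)

lemma icAux_nonneg (k : ℕ) : 0 ≤ icAux k := by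
  unfold icAux
  have h1 : (0:ℝ) < (k:ℝ) + 1 := by positivity
  have : 1 / ((k:ℝ) + 1) ≤ 1 := by
    rw [div_le_one h1]; linarith
  linarith

lemma icAux_zero : icAux 0 = 0 := by unfold icAux; norm_num

lemma icAux_succ (k : ℕ) : icAux (k + 1) = 1 - 1 / ((k:ℝ) + 2) := by
  unfold icAux; push_cast; ring_nf

lemma icAux_lt_one (k : ℕ) : icAux k < 1 := by
  unfold icAux
  have h1 : (0:ℝ) < (k:ℝ) + 1 := by positivity
  have : 0 < 1 / ((k:ℝ) + 1) := by positivity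
  linarith

lemma icAux_lt_succ (k : ℕ) : icAux k < icAux (k + 1) := by
  unfold icAux
  push_cast
  have e : (k:ℝ) + 1 + 1 = (k:ℝ) + 2 := by ring
  rw [e]
  have h1 : (0:ℝ) < (k:ℝ) + 1 := by positivity
  have h2 : (0:ℝ) < (k:ℝ) + 2 := by positivity
  have : 1 / ((k:ℝ) + 2) < 1 / ((k:ℝ) + 1) := by
    apply one_div_lt_one_div_of_lt h1; linarith
  linarith

lemma icAux_mono : StrictMono icAux := strictMono_nat_of_lt_succ icAux_lt_succ

/-- every `s ∈ [0,1)` lies in some interval `[a k, a (k+1))`. -/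
lemma icAux_exists {s : ℝ} (h0 : 0 ≤ s) (h1 : s < 1) :
    ∃ k : ℕ, icAux k ≤ s ∧ s < icAux (k + 1) := by
  have hs : 0 < 1 - s := by linarith
  have hinv1 : (1:ℝ) ≤ (1 - s)⁻¹ := by
    rw [le_inv_comm₀ one_pos hs]; linarith
  set n := ⌊(1 - s)⁻¹⌋₊ with hn
  have hn1 : 1 ≤ n := Nat.le_floor (by exact_mod_cast hinv1)
  refine ⟨n - 1, ?_, ?_⟩
  · have hfl : (n : ℝ) ≤ (1 - s)⁻¹ := Nat.floor_le (by positivity)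
    have hcast : ((n - 1 : ℕ) : ℝ) + 1 = (n : ℝ) := by
      have : (n - 1) + 1 = n := Nat.succ_pred_eq_of_pos hn1
      exact_mod_cast congrArg (Nat.cast (R := ℝ)) this
    unfold icAux
    rw [hcast]
    have hnpos : (0:ℝ) < n := by exact_mod_cast hn1
    have h2 : (1 - s) * n ≤ 1 := by
      calc (1 - s) * n ≤ (1 - s) * (1 - s)⁻¹ :=
            mul_le_mul_of_nonneg_left hfl (le_of_lt hs)
        _ = 1 := mul_inv_cancel₀ (ne_of_gt hs)
    have : 1 - s ≤ 1 / n := by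
      rw [le_div_iff₀ hnpos]; linarith
    linarith
  · have hfl : (1 - s)⁻¹ < n + 1 := Nat.lt_floor_add_one _
    have hcast : ((n - 1 + 1 : ℕ) : ℝ) + 1 = (n : ℝ) + 1 := by
      have : (n - 1) + 1 = n := Nat.succ_pred_eq_of_pos hn1
      rw [this]
    unfold icAux
    rw [hcast]
    have hnpos : (0:ℝ) < (n:ℝ) + 1 := by positivity
    have h2 : 1 < (1 - s) * ((n:ℝ) + 1) := by
      calc 1 = (1 - s) * (1 - s)⁻¹ := (mul_inv_cancel₀ (ne_of_gt hs)).symm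
        _ < (1 - s) * ((n:ℝ) + 1) := mul_lt_mul_of_pos_left hfl hs
    have : 1 / ((n:ℝ) + 1) < 1 - s := by
      rw [div_lt_iff₀ hnpos]; linarith
    linarith

open Filter in
theorem infinite_concatenation_continuous {X : Type*} [TopologicalSpace X]
    [PathConnectedSpace X] [LocallyPathConnectedSpace X]
    (mseq : ℕ → X) (m : X) (hm : Tendsto mseq atTop (nhds m))
    (ρseq : ∀ k : ℕ, Path (mseq k) (mseq (k + 1)))
    (hU : ∀ U ∈ nhds m, ∀ᶠ k in atTop, Set.range (ρseq k) ⊆ U)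
    (ρ : unitInterval → X)
    (hρ : ∀ k : ℕ, ∀ t : unitInterval,
      1 - 1 / ((k : ℝ) + 1) ≤ (t : ℝ) → (t : ℝ) < 1 - 1 / ((k : ℝ) + 2) →
      ρ t = (ρseq k).extend
        (((t : ℝ) - (1 - 1 / ((k : ℝ) + 1))) * ((k : ℝ) + 1) * ((k : ℝ) + 2)))
    (hρ1 : ρ 1 = m) :
    Continuous ρ ∧ ρ 0 = mseq 0 ∧ ρ 1 = m := by
  -- the rescaled pieces as maps on ℝ
  set g : ℕ → ℝ → X :=
    fun k x => (ρseq k).extend ((x - icAux k) * ((k:ℝ) + 1) * ((k:ℝ) + 2)) with hg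
  have hgcont : ∀ k, Continuous (g k) := fun k =>
    (ρseq k).continuous_extend.comp (by fun_prop)
  -- restate hρ in terms of icAux
  have hρ' : ∀ k : ℕ, ∀ t : unitInterval,
      icAux k ≤ (t : ℝ) → (t : ℝ) < icAux (k + 1) → ρ t = g k t := by
    intro k t h1 h2
    rw [icAux_succ] at h2
    exact hρ k t h1 h2
  -- the value of g k at the right endpoint
  have hgend : ∀ k : ℕ, g k (icAux (k + 1)) = mseq (k + 1) := by
    intro k
    have harg : (icAux (k + 1) - icAux k) * ((k:ℝ) + 1) * ((k:ℝ) + 2) = 1 := by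
      rw [icAux_succ]
      unfold icAux
      have h1 : ((k:ℝ) + 1) ≠ 0 := by positivity
      have h2 : ((k:ℝ) + 2) ≠ 0 := by positivity
      field_simp
      ring
    rw [hg]
    simp only [harg, Path.extend_one]
  have hgstart : ∀ k : ℕ, g k (icAux k) = mseq k := by
    intro k
    rw [hg]
    simp only [sub_self, zero_mul, Path.extend_zero]
  -- extension of hρ' to the closed right endpoint
  have hA : ∀ k : ℕ, ∀ t : unitInterval,
      icAux k ≤ (t : ℝ) → (t : ℝ) ≤ icAux (k + 1) → ρ t = g k t := by
    intro k t h1 h2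
    rcases lt_or_eq_of_le h2 with h2' | h2'
    · exact hρ' k t h1 h2'
    · have hval : ρ t = mseq (k + 1) := by
        have hb1 : icAux (k + 1) ≤ (t : ℝ) := le_of_eq h2'.symm
        have hb2 : (t : ℝ) < icAux (k + 2) := h2' ▸ icAux_lt_succ (k + 1)
        rw [hρ' (k + 1) t hb1 hb2, hg]
        simp only [h2', sub_self, zero_mul, Path.extend_zero]
      rw [hval, h2', hgend k]
  -- junction equality
  have hjunc : ∀ k : ℕ, g k (icAux (k + 1)) = g (k + 1) (icAux (k + 1)) := by
    intro k
    rw [hgend k, hgstart (k + 1)]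
  -- continuity at points strictly inside (icAux j, icAux (j+2))
  have hC : ∀ j : ℕ, ∀ t : unitInterval,
      icAux j < (t : ℝ) → (t : ℝ) < icAux (j + 2) → ContinuousAt ρ t := by
    intro j t ht1 ht2
    classical
    set F : ℝ → X := fun x => if x ≤ icAux (j + 1) then g j x else g (j + 1) x with hF
    have hFcont : Continuous F := by
      apply Continuous.if_le (hgcont j) (hgcont (j + 1)) continuous_id continuous_const
      intro x hx
      rw [id] at hx
      rw [hx]
      exact hjunc j
    have hbase : ContinuousAt (fun s : unitInterval => F (s : ℝ)) t :=
      (hFcont.comp continuous_subtype_val).continuousAt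
    apply hbase.congr
    have hVopen : IsOpen {s : unitInterval | icAux j < (s : ℝ) ∧ (s : ℝ) < icAux (j + 2)} := by
      have : {s : unitInterval | icAux j < (s : ℝ) ∧ (s : ℝ) < icAux (j + 2)} =
          (fun s : unitInterval => (s : ℝ)) ⁻¹' Ioo (icAux j) (icAux (j + 2)) := rfl
      rw [this]
      exact isOpen_Ioo.preimage continuous_subtype_val
    refine Filter.eventuallyEq_of_mem (hVopen.mem_nhds ⟨ht1, ht2⟩) ?_
    intro s hs
    by_cases hle : (s : ℝ) ≤ icAux (j + 1)
    · rw [hA j s hs.1.le hle, hF]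
      simp only [hle, if_true]
    · push_neg at hle
      rw [hA (j + 1) s hle.le hs.2.le, hF]
      simp only [not_le.mpr hle, if_false]
  -- continuity at 0
  have h0 : ContinuousAt ρ 0 := by
    have hbase : ContinuousAt (fun s : unitInterval => g 0 (s : ℝ)) 0 :=
      ((hgcont 0).comp continuous_subtype_val).continuousAt
    apply hbase.congr
    have hVopen : IsOpen {s : unitInterval | (s : ℝ) < icAux 1} := by
      have : {s : unitInterval | (s : ℝ) < icAux 1} =
          (fun s : unitInterval => (s : ℝ)) ⁻¹' Iio (icAux 1) := rfl
      rw [this]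
      exact isOpen_Iio.preimage continuous_subtype_val
    have h0mem : (0 : unitInterval) ∈ {s : unitInterval | (s : ℝ) < icAux 1} := by
      show (0:ℝ) < icAux 1
      rw [← icAux_zero]
      exact icAux_lt_succ 0
    refine Filter.eventuallyEq_of_mem (hVopen.mem_nhds h0mem) ?_
    intro s hs
    exact (hA 0 s (icAux_zero ▸ s.2.1) hs.le).symm
  -- continuity at 1
  have h1 : ContinuousAt ρ 1 := by
    rw [ContinuousAt, hρ1]
    intro U hUm
    rw [mem_map]
    rcases (hU U hUm).exists_forall_of_atTop with ⟨N, hN⟩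
    have hVopen : IsOpen {s : unitInterval | icAux N < (s : ℝ)} := by
      have : {s : unitInterval | icAux N < (s : ℝ)} =
          (fun s : unitInterval => (s : ℝ)) ⁻¹' Ioi (icAux N) := rfl
      rw [this]
      exact isOpen_Ioi.preimage continuous_subtype_val
    have h1mem : (1 : unitInterval) ∈ {s : unitInterval | icAux N < (s : ℝ)} :=
      icAux_lt_one N
    refine Filter.mem_of_superset (hVopen.mem_nhds h1mem) ?_
    intro s hs
    by_cases hs1 : (s : ℝ) = 1
    · have : s = 1 := Subtype.ext hs1
      rw [Set.mem_preimage, this, hρ1]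
      exact mem_of_mem_nhds hUm
    · have hs1' : (s : ℝ) < 1 := lt_of_le_of_ne s.2.2 hs1
      obtain ⟨k, hk1, hk2⟩ := icAux_exists s.2.1 hs1'
      have hNk : N ≤ k := by
        by_contra hlt
        push_neg at hlt
        have h3 : icAux (k + 1) ≤ icAux N := icAux_mono.monotone hlt
        have h4 : icAux N < (s:ℝ) := hs
        linarith
      rw [Set.mem_preimage, hρ' k s hk1 hk2]
      apply hN k hNk
      exact ⟨Set.projIcc 0 1 zero_le_one _, rfl⟩
  refine ⟨?_, ?_, hρ1⟩
  · rw [continuous_iff_continuousAt]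
    intro t
    by_cases ht1 : (t : ℝ) = 1
    · have : t = 1 := Subtype.ext ht1
      rw [this]; exact h1
    · have ht1' : (t : ℝ) < 1 := lt_of_le_of_ne t.2.2 ht1
      obtain ⟨k, hk1, hk2⟩ := icAux_exists t.2.1 ht1'
      rcases lt_or_eq_of_le hk1 with hlt | heq
      · exact hC k t hlt (lt_trans hk2 (icAux_lt_succ (k + 1)))
      · match k, heq with
        | 0, heq =>
          have : t = 0 := Subtype.ext (by rw [← heq, icAux_zero]; rfl)
          rw [this]; exact h0
        | (j + 1), heq =>
          refine hC j t ?_ ?_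
          · rw [← heq]; exact icAux_lt_succ j
          · exact hk2
  · have hc0 : (((0 : unitInterval)) : ℝ) = 0 := rfl
    have : ρ 0 = g 0 ((0 : unitInterval) : ℝ) := by
      apply hA 0 0
      · rw [icAux_zero, hc0]
      · rw [hc0, ← icAux_zero]
        exact (icAux_lt_succ 0).le
    rw [this, hg, hc0]
    show (ρseq 0).extend ((0 - icAux 0) * _ * _) = mseq 0
    rw [icAux_zero]
    norm_num
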